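/- arXiv:2403.16284 — 2 statements merged into one kernel-verified Lean document; each statement's English description precedes it below -/
import Mathlib

section
/- Let m ≥ 2. Let c_0, c_1, …, c_{m−1} be integers with c_i ≥ 2 for 0 ≤ i ≤ m−1, let c_m ≥ 1 be a natural number, and let d_1, …, d_m be integers with 1 ≤ d_i ≤ c_{i−1} − 1 for 1 ≤ i ≤ m. Set v = c_0 c_1 ⋯ c_m. Then there exists a non-disjoint (v, m, d_1·v/c_0, d_2·v/c_1, …, d_m·v/c_{m−1})-GPSEDF in ℤ_v. -/
open Finset

def extDiff {G : Type*} [AddGroup G] (A B : Finset G) : Multiset G :=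
  A.val.bind fun a => B.val.map fun b => a - b

lemma count_extDiff {G : Type*} [AddCommGroup G] [DecidableEq G] (A B : Finset G) (g : G) :
    Multiset.count g (extDiff A B) = (A.filter fun a => a - g ∈ B).card := by
  unfold extDiff
  rw [Multiset.count_bind, Finset.card_filter]
  rw [Finset.sum]
  congr 1
  refine Multiset.map_congr rfl fun a _ => ?_
  have hinj : Function.Injective (fun b : G => a - b) := fun x y h => by
    simpa using h
  have h1 := Multiset.count_map_eq_count' (fun b : G => a - b) B.val hinj (a - g)
  have h2 : a - (a - g) = g := sub_sub_cancel a g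
  rw [h2] at h1
  rw [h1]
  split_ifs with h
  · exact Multiset.count_eq_one_of_mem B.nodup h
  · exact Multiset.count_eq_zero_of_notMem h

lemma filter_sub_card {G : Type*} [AddCommGroup G] [DecidableEq G] (A B : Finset G) (g : G) :
    (A.filter fun a => a - g ∈ B).card = (B.filter fun b => b - (-g) ∈ A).card := by
  refine Finset.card_nbij' (fun a => a - g) (fun b => b + g) ?_ ?_ ?_ ?_
  · intro a ha
    simp only [mem_filter, mem_coe] at ha ⊢
    refine ⟨ha.2, ?_⟩
    simpa [sub_neg_eq_add, sub_add_cancel] using ha.1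
  · intro b hb
    simp only [mem_filter, mem_coe, sub_neg_eq_add] at hb ⊢
    refine ⟨hb.2, by simpa using hb.1⟩
  · intro a _; simp
  · intro b _; simp

lemma filter_mod_card (P : ℕ) (p : ℕ → Prop) [DecidablePred p] (k : ℕ) :
    ((range (k * P)).filter fun n => p (n % P)).card
      = k * ((range P).filter p).card := by
  induction k with
  | zero => simp
  | succ k ih =>
    have hx : (k + 1) * P = k * P + P := by ring
    rw [hx, Finset.range_add, Finset.filter_union, Finset.card_union_of_disjoint, ih,
      Nat.succ_mul]
    · congr 1
      rw [Finset.filter_map, Finset.card_map]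
      congr 1
      refine Finset.filter_congr fun n hn => ?_
      simp only [Finset.mem_range] at hn
      simp only [Function.comp, addLeftEmbedding_apply]
      rw [add_comm (k * P) n, Nat.add_mul_mod_self_right, Nat.mod_eq_of_lt hn]
    · rw [Finset.disjoint_left]
      intro x hx1 hx2
      simp only [Finset.mem_filter, Finset.mem_range] at hx1
      simp only [Finset.mem_filter, Finset.mem_map, addLeftEmbedding_apply] at hx2
      obtain ⟨⟨y, _, rfl⟩, -⟩ := hx2
      omega

lemma rotate_card (Q t E : ℕ) (hE : E ≤ Q) :
    ((range Q).filter fun r => (r + t) % Q < E).card = E := by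
  rcases Nat.eq_zero_or_pos Q with hQ | hQ
  · subst hQ; simp; omega
  have key : ∀ x, (x + (Q - t % Q) + t) % Q = x % Q := by
    intro x
    have h1 : x + (Q - t % Q) + t = x + Q * (t / Q) + Q := by
      have := Nat.div_add_mod t Q
      have := Nat.mod_lt t hQ
      omega
    rw [h1, show x + Q * (t / Q) + Q = x + Q * (t / Q + 1) by ring,
      Nat.add_mul_mod_self_left]
  have key2 : ∀ x, (x + t + (Q - t % Q)) % Q = x % Q := by
    intro x
    rw [show x + t + (Q - t % Q) = x + (Q - t % Q) + t by ring, key]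
  have hmain : ((range Q).filter fun r => (r + t) % Q < E).card = (range E).card := by
    refine Finset.card_nbij' (fun r => (r + t) % Q) (fun s => (s + (Q - t % Q)) % Q)
      ?_ ?_ ?_ ?_
    · intro a ha
      simp only [mem_filter, mem_range, mem_coe] at ha ⊢
      exact ha.2
    · intro b hb
      simp only [mem_range, mem_coe] at hb
      have hb' : b < Q := lt_of_lt_of_le hb hE
      simp only [mem_filter, mem_range, mem_coe]
      refine ⟨Nat.mod_lt _ hQ, ?_⟩
      rw [Nat.mod_add_mod, key, Nat.mod_eq_of_lt hb']
      exact hb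
    · intro a ha
      simp only [mem_filter, mem_range, mem_coe] at ha
      show ((a + t) % Q + (Q - t % Q)) % Q = a
      rw [Nat.mod_add_mod, key2, Nat.mod_eq_of_lt ha.1]
    · intro b hb
      simp only [mem_range, mem_coe] at hb
      have hb' : b < Q := lt_of_lt_of_le hb hE
      show ((b + (Q - t % Q)) % Q + t) % Q = b
      rw [Nat.mod_add_mod, key, Nat.mod_eq_of_lt hb']
  rw [hmain, Finset.card_range]

lemma nat_count (v P Q D E t : ℕ) (hQ0 : 0 < Q) (hPv : P ∣ v) (hQP : Q ∣ P) (hQD : Q ∣ D)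
    (hDP : D ≤ P) (hEQ : E ≤ Q) :
    ((range v).filter fun n => n % P < D ∧ (n + t) % Q < E).card
      = (v / P) * ((D / Q) * E) := by
  have hpred : ∀ n : ℕ, (n + t) % Q = (n % P + t) % Q := by
    intro n
    obtain ⟨s, rfl⟩ := hQP
    conv_lhs => rw [← Nat.div_add_mod n (Q * s)]
    rw [show Q * s * (n / (Q * s)) + n % (Q * s) + t
        = n % (Q * s) + t + Q * (s * (n / (Q * s))) by ring, Nat.add_mul_mod_self_left]
  have h1 : ((range v).filter fun n => n % P < D ∧ (n + t) % Q < E)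
      = ((range v).filter fun n => (fun r => r < D ∧ (r + t) % Q < E) (n % P)) := by
    refine Finset.filter_congr fun n _ => ?_
    rw [hpred n]
  have h2 : ((range v).filter fun n => n % P < D ∧ (n + t) % Q < E).card
      = (v / P) * ((range P).filter fun r => r < D ∧ (r + t) % Q < E).card := by
    conv_lhs => rw [h1, show v = (v / P) * P from (Nat.div_mul_cancel hPv).symm]
    exact filter_mod_card P (fun r => r < D ∧ (r + t) % Q < E) (v / P)
  have h3 : ((range P).filter fun r => r < D ∧ (r + t) % Q < E)
      = (range D).filter fun r => (r + t) % Q < E := by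
    ext r
    simp only [mem_filter, mem_range]
    constructor
    · rintro ⟨-, h2, h3⟩; exact ⟨h2, h3⟩
    · rintro ⟨h2, h3⟩; exact ⟨lt_of_lt_of_le h2 hDP, h2, h3⟩
  have h4 : ((range D).filter fun r => (r + t) % Q < E)
      = (range D).filter fun r => (fun s => (s + t) % Q < E) (r % Q) := by
    refine Finset.filter_congr fun n _ => ?_
    show (n + t) % Q < E ↔ (n % Q + t) % Q < E
    rw [Nat.mod_add_mod]
  have h5 : ((range D).filter fun r => (fun s => (s + t) % Q < E) (r % Q)).card
      = (D / Q) * ((range Q).filter fun s => (s + t) % Q < E).card := by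
    conv_lhs => rw [show D = (D / Q) * Q from (Nat.div_mul_cancel hQD).symm]
    exact filter_mod_card Q (fun s => (s + t) % Q < E) (D / Q)
  rw [h2, h3, h4, h5, rotate_card Q t E hEQ]
lemma main_aux (m v : ℕ) [NeZero v] (C : ℕ → ℕ) (d : Fin m → ℕ)
    (hCpos : ∀ k, 0 < C k) (hdC : ∀ i : Fin m, d i ≤ C i.1)
    (hv : v = ∏ j ∈ Finset.range (m + 1), C j) :
    ∃ A : Fin m → Finset (ZMod v),
      (∀ i, (A i).card = d i * (v / C i.1)) ∧
      ∀ i j, i ≠ j → ∃ lam : ℕ,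
        lam * v = (d i * (v / C i.1)) * (d j * (v / C j.1)) ∧
        extDiff (A i) (A j) = lam • (Finset.univ : Finset (ZMod v)).val := by
  classical
  have hvpos : 0 < v := NeZero.pos v
  set Pf : ℕ → ℕ := fun k => ∏ j ∈ Finset.range k, C j with hPf
  have hPfpos : ∀ k, 0 < Pf k := fun k => Finset.prod_pos fun j _ => hCpos j
  have hPfdvd : ∀ {a b : ℕ}, a ≤ b → Pf a ∣ Pf b := fun h =>
    Finset.prod_dvd_prod_of_subset _ _ C (Finset.range_subset_range.2 h)
  have hPfsucc : ∀ k, Pf (k + 1) = Pf k * C k := fun k => Finset.prod_range_succ C k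
  have hvPf : v = Pf (m + 1) := hv
  have hPv : ∀ i : Fin m, Pf (i.1 + 1) ∣ v := fun i => by
    rw [hvPf]; exact hPfdvd (by have := i.2; omega)
  have hDle : ∀ i : Fin m, d i * Pf i.1 ≤ Pf (i.1 + 1) := fun i => by
    rw [hPfsucc, Nat.mul_comm (Pf i.1) (C i.1)]
    exact Nat.mul_le_mul_right _ (hdC i)
  have hcast_inj : ∀ a < v, ∀ b < v, (a : ZMod v) = b → a = b := by
    intro a ha b hb h
    calc a = ((a : ZMod v)).val := (ZMod.val_cast_of_lt ha).symm
      _ = ((b : ZMod v)).val := by rw [h]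
      _ = b := ZMod.val_cast_of_lt hb
  have hcard0 : ∀ S : Finset ℕ, S ⊆ Finset.range v →
      (S.image (Nat.cast : ℕ → ZMod v)).card = S.card := by
    intro S hS
    refine Finset.card_image_of_injOn fun a ha b hb h => ?_
    exact hcast_inj a (Finset.mem_range.1 (hS ha)) b (Finset.mem_range.1 (hS hb)) h
  set A : Fin m → Finset (ZMod v) := fun i =>
    ((Finset.range v).filter fun n => n % Pf (i.1 + 1) < d i * Pf i.1).image
      (Nat.cast : ℕ → ZMod v) with hA
  have hmem : ∀ (i : Fin m) (x : ZMod v),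
      x ∈ A i ↔ x.val % Pf (i.1 + 1) < d i * Pf i.1 := by
    intro i x
    simp only [hA, Finset.mem_image, Finset.mem_filter, Finset.mem_range]
    constructor
    · rintro ⟨n, ⟨hn, hlt⟩, rfl⟩
      rwa [ZMod.val_cast_of_lt hn]
    · intro h
      exact ⟨x.val, ⟨ZMod.val_lt x, h⟩, ZMod.natCast_rightInverse x⟩
  have hcardNat : ∀ i : Fin m,
      ((Finset.range v).filter fun n => n % Pf (i.1 + 1) < d i * Pf i.1).card
        = (v / Pf (i.1 + 1)) * (d i * Pf i.1) := by
    intro i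
    conv_lhs => rw [show v = (v / Pf (i.1 + 1)) * Pf (i.1 + 1) from
      (Nat.div_mul_cancel (hPv i)).symm]
    rw [filter_mod_card (Pf (i.1 + 1)) (fun r => r < d i * Pf i.1) (v / Pf (i.1 + 1))]
    congr 1
    have : ((Finset.range (Pf (i.1 + 1))).filter fun r => r < d i * Pf i.1)
        = Finset.range (d i * Pf i.1) := by
      ext r
      simp only [Finset.mem_filter, Finset.mem_range]
      constructor
      · rintro ⟨-, h⟩; exact h
      · intro h; exact ⟨lt_of_lt_of_le h (hDle i), h⟩
    rw [this, Finset.card_range]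
  have hcardA : ∀ i : Fin m, (A i).card = (v / Pf (i.1 + 1)) * (d i * Pf i.1) := by
    intro i
    simp only [hA]
    rw [hcard0 _ (Finset.filter_subset _ _), hcardNat]
  have hform : ∀ i : Fin m,
      (v / Pf (i.1 + 1)) * (d i * Pf i.1) = d i * (v / C i.1) := by
    intro i
    obtain ⟨w, hw⟩ := hPv i
    have hCi : v / C i.1 = Pf i.1 * w := by
      rw [hw, hPfsucc, show Pf i.1 * C i.1 * w = C i.1 * (Pf i.1 * w) by ring,
        Nat.mul_div_cancel_left _ (hCpos i.1)]
    have hPw : v / Pf (i.1 + 1) = w := by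
      rw [hw, Nat.mul_div_cancel_left _ (hPfpos _)]
    rw [hPw, hCi]; ring
  have hpair : ∀ i j : Fin m, j.1 < i.1 → ∀ g : ZMod v,
      ((A i).filter fun a => a - g ∈ A j).card
        = (v / Pf (i.1 + 1)) * ((d i * Pf i.1) / Pf (j.1 + 1) * (d j * Pf j.1)) := by
    intro i j hij g
    have hgv : g.val ≤ v := le_of_lt (ZMod.val_lt g)
    have hQv : Pf (j.1 + 1) ∣ v := hPv j
    have hcond : ∀ n ∈ Finset.range v,
        (((n : ZMod v) - g ∈ A j) ↔ (n + (v - g.val)) % Pf (j.1 + 1) < d j * Pf j.1) := by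
      intro n _
      rw [hmem j]
      have hcast : ((n + (v - g.val) : ℕ) : ZMod v) = (n : ZMod v) - g := by
        rw [Nat.cast_add, Nat.cast_sub hgv, ZMod.natCast_self,
          ZMod.natCast_rightInverse g]
        ring
      rw [← hcast, ZMod.val_natCast, Nat.mod_mod_of_dvd _ hQv]
    have e1 : (A i).filter (fun a => a - g ∈ A j)
        = ((Finset.range v).filter fun n =>
            n % Pf (i.1 + 1) < d i * Pf i.1 ∧ ((n : ZMod v) - g ∈ A j)).image
          (Nat.cast : ℕ → ZMod v) := by
      simp only [hA]
      rw [Finset.filter_image, Finset.filter_filter]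
    have e2 : ((Finset.range v).filter fun n =>
          n % Pf (i.1 + 1) < d i * Pf i.1 ∧ ((n : ZMod v) - g ∈ A j))
        = (Finset.range v).filter fun n =>
          n % Pf (i.1 + 1) < d i * Pf i.1 ∧
            (n + (v - g.val)) % Pf (j.1 + 1) < d j * Pf j.1 := by
      refine Finset.filter_congr fun n hn => ?_
      rw [hcond n hn]
    rw [e1, e2, hcard0 _ (Finset.filter_subset _ _)]
    exact nat_count v (Pf (i.1 + 1)) (Pf (j.1 + 1)) (d i * Pf i.1) (d j * Pf j.1)
      (v - g.val) (hPfpos _) (hPv i) (hPfdvd (by omega))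
      (Dvd.dvd.mul_left (hPfdvd (by omega)) (d i)) (hDle i) (hDle j)
  have harith : ∀ i j : Fin m, j.1 < i.1 →
      ((v / Pf (i.1 + 1)) * ((d i * Pf i.1) / Pf (j.1 + 1) * (d j * Pf j.1))) * v
        = (d i * (v / C i.1)) * (d j * (v / C j.1)) := by
    intro i j hij
    rw [← hform i, ← hform j]
    obtain ⟨u, hu⟩ := hPv j
    obtain ⟨s, hs⟩ : Pf (j.1 + 1) ∣ d i * Pf i.1 :=
      Dvd.dvd.mul_left (hPfdvd (by omega)) (d i)
    have hvQ : v / Pf (j.1 + 1) = u := by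
      rw [hu, Nat.mul_div_cancel_left _ (hPfpos _)]
    rw [hs, hvQ, Nat.mul_div_cancel_left _ (hPfpos _), hu]
    ring
  refine ⟨A, fun i => by rw [hcardA i, hform i], ?_⟩
  intro i j hij
  rcases Nat.lt_or_ge j.1 i.1 with h | h
  · refine ⟨(v / Pf (i.1 + 1)) * ((d i * Pf i.1) / Pf (j.1 + 1) * (d j * Pf j.1)),
      harith i j h, ?_⟩
    refine Multiset.ext.2 fun g => ?_
    rw [count_extDiff, hpair i j h g, Multiset.count_nsmul,
      Multiset.count_eq_one_of_mem Finset.univ.nodup (Finset.mem_univ g), Nat.mul_one]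
  · have h' : i.1 < j.1 := by
      rcases Nat.lt_or_ge i.1 j.1 with h2 | h2
      · exact h2
      · exact absurd (Fin.ext (by omega)) hij
    refine ⟨(v / Pf (j.1 + 1)) * ((d j * Pf j.1) / Pf (i.1 + 1) * (d i * Pf i.1)),
      ?_, ?_⟩
    · rw [harith j i h']
      ring
    · refine Multiset.ext.2 fun g => ?_
      rw [count_extDiff, filter_sub_card, hpair j i h' (-g), Multiset.count_nsmul,
        Multiset.count_eq_one_of_mem Finset.univ.nodup (Finset.mem_univ g), Nat.mul_one]

/-- given `c₀,…,c_{m-1} ≥ 2`, `c_m ≥ 1` and `1 ≤ dᵢ ≤ c_{i-1} - 1`, with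
`v = c₀c₁⋯c_m`, there exists a non-disjoint `(v, m, d₁·v/c₀, …, d_m·v/c_{m-1})`-GPSEDF
in `ℤ_v`. -/
theorem stmt_8 (m : ℕ) (hm : 2 ≤ m) (c : Fin (m + 1) → ℕ) (d : Fin m → ℕ)
    (hc : ∀ i : Fin m, 2 ≤ c i.castSucc) (hcm : 1 ≤ c (Fin.last m))
    (hd₁ : ∀ i, 1 ≤ d i) (hd₂ : ∀ i, d i ≤ c i.castSucc - 1)
    (v : ℕ) (hv : v = ∏ i, c i) :
    haveI : NeZero v := ⟨by
      subst hv
      exact (Finset.prod_pos (fun i _ => Fin.lastCases (by omega)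
        (fun j => by have := hc j; omega) i)).ne'⟩
    ∃ A : Fin m → Finset (ZMod v),
      (∀ i, (A i).card = d i * (v / c i.castSucc)) ∧
      ∀ i j, i ≠ j → ∃ lam : ℕ,
        lam * v = (d i * (v / c i.castSucc)) * (d j * (v / c j.castSucc)) ∧
        extDiff (A i) (A j) = lam • (Finset.univ : Finset (ZMod v)).val := by
  haveI : NeZero v := ⟨by
    subst hv
    exact (Finset.prod_pos (fun i _ => Fin.lastCases (by omega)
      (fun j => by have := hc j; omega) i)).ne'⟩
  set C : ℕ → ℕ := fun k => if h : k < m + 1 then c ⟨k, h⟩ else 1 with hC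
  have hCi : ∀ i : Fin m, c i.castSucc = C i.1 := by
    intro i
    simp only [hC]
    rw [dif_pos (Nat.lt_succ_of_lt i.2)]
    congr 1
  have hCpos : ∀ k, 0 < C k := by
    intro k
    simp only [hC]
    split
    · rename_i h
      rcases Nat.lt_or_ge k m with h2 | h2
      · have h3 := hc ⟨k, h2⟩
        have h4 : (⟨k, h2⟩ : Fin m).castSucc = ⟨k, h⟩ := Fin.ext (by simp)
        rw [h4] at h3
        omega
      · have h4 : (⟨k, h⟩ : Fin (m + 1)) = Fin.last m := Fin.ext (by simp [Fin.val_last]; omega)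
        rw [h4]
        omega
    · omega
  have hdC : ∀ i : Fin m, d i ≤ C i.1 := by
    intro i
    have h1 := hd₂ i
    rw [hCi i] at h1
    have h2 := hCpos i.1
    omega
  have hv' : v = ∏ j ∈ Finset.range (m + 1), C j := by
    rw [hv, ← Fin.prod_univ_eq_prod_range C (m + 1)]
    refine Finset.prod_congr rfl fun i _ => ?_
    simp only [hC]
    rw [dif_pos i.2]
  obtain ⟨A, h1, h2⟩ := main_aux m v C d hCpos hdC hv'
  refine ⟨A, fun i => by rw [hCi i]; exact h1 i, fun i j hij => ?_⟩
  obtain ⟨lam, hl1, hl2⟩ := h2 i j hij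
  exact ⟨lam, by rw [hCi i, hCi j]; exact hl1, hl2⟩
end

section
/- Let v = ab for natural numbers a, b ≥ 2. Then for any integers k_1, k_2 with 1 ≤ k_1 ≤ b−1 and 1 ≤ k_2 ≤ a−1, there exists a non-disjoint (v, 2, k_1·a, k_2·b)-GPSEDF in ℤ_v, i.e. two subsets A, B ⊆ ℤ_v with |A| = k_1a, |B| = k_2b and Δ(A,B) = Δ(B,A) = k_1k_2 ℤ_v as multisets. -/
section aux

variable {α β γ : Type*}

lemma prod_val_map (s : Finset α) (t : Finset β) (f : α × β → γ) :
    (s ×ˢ t).val.map f = s.val.bind fun x => t.val.map fun y => f (x, y) := by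
  rw [Finset.product_val]
  show ((s.val.bind fun a => t.val.map (Prod.mk a)).map f) = _
  rw [Multiset.map_bind]
  simp [Multiset.map_map, Function.comp]

lemma prod_val_bind (s : Finset α) (t : Finset β) (h : α × β → Multiset γ) :
    (s ×ˢ t).val.bind h = s.val.bind fun x => t.val.bind fun y => h (x, y) := by
  rw [Finset.product_val]
  show ((s.val.bind fun a => t.val.map (Prod.mk a)).bind h) = _
  rw [Multiset.bind_assoc]
  exact Multiset.bind_congr fun x _ => Multiset.bind_map _ _ _

lemma bind_const (s : Multiset α) (t : Multiset β) :
    (s.bind fun _ => t) = Multiset.card s • t := by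
  induction s using Multiset.induction_on with
  | empty => simp
  | cons a s ih => simp [ih, add_smul, one_smul, add_comm]

lemma cast_inj_lt {v m n : ℕ} [NeZero v] (hm : m < v) (hn : n < v)
    (h : (m : ZMod v) = n) : m = n := by
  have := congrArg ZMod.val h
  rwa [ZMod.val_cast_of_lt hm, ZMod.val_cast_of_lt hn] at this

lemma nat_unique {b i i' t t' : ℕ} (hi : i < b) (hi' : i' < b)
    (h : i + t * b = i' + t' * b) : i = i' ∧ t = t' := by
  have hb : 0 < b := Nat.pos_of_ne_zero (by omega)
  have h1 : i = i' := by
    have := congrArg (· % b) h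
    simpa [Nat.add_mul_mod_self_right, Nat.mod_eq_of_lt hi, Nat.mod_eq_of_lt hi'] using this
  subst h1
  exact ⟨rfl, Nat.eq_of_mul_eq_mul_right hb (by omega)⟩

lemma lt_mul {a b i t : ℕ} (hi : i < b) (ht : t < a) : i + t * b < a * b :=
  calc i + t * b < b + t * b := by omega
    _ = (t + 1) * b := by ring
    _ ≤ a * b := Nat.mul_le_mul_right b ht

/-- The key lemma: for fixed `c, e`, the differences `(c + t·b) - (e·b + r)` with
`t < a`, `r < b` cover `ZMod (a·b)` exactly once. -/
lemma key (a b : ℕ) (ha : 0 < a) (hb : 0 < b) [NeZero (a * b)] (c e : ZMod (a * b)) :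
    ((Finset.range a).val.bind fun (t : ℕ) =>
      (Finset.range b).val.map fun (r : ℕ) =>
        (c + (t : ZMod (a * b)) * b) - (e + (r : ZMod (a * b))))
      = (Finset.univ : Finset (ZMod (a * b))).val := by
  have hinj : Set.InjOn (fun p : ℕ × ℕ => (c + (p.1 : ZMod (a * b)) * b) - (e + (p.2 : ZMod (a * b))))
      ↑(Finset.range a ×ˢ Finset.range b) := by
    rintro ⟨t, r⟩ hp ⟨t', r'⟩ hq hpq
    simp only [Finset.coe_product, Set.mem_prod, Finset.mem_coe, Finset.mem_range] at hp hq
    simp only at hpq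
    have h1 : ((t * b + r' : ℕ) : ZMod (a * b)) = ((t' * b + r : ℕ) : ZMod (a * b)) := by
      push_cast
      linear_combination hpq
    have h2 : t * b + r' = t' * b + r :=
      cast_inj_lt (by have := lt_mul hq.2 hp.1; omega) (by have := lt_mul hp.2 hq.1; omega) h1
    have h3 := nat_unique hq.2 hp.2 (by omega : r' + t * b = r + t' * b)
    simp [Prod.ext_iff, h3.1, h3.2]
  have himg : (Finset.range a ×ˢ Finset.range b).image
      (fun p : ℕ × ℕ => (c + (p.1 : ZMod (a * b)) * b) - (e + (p.2 : ZMod (a * b))))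
      = Finset.univ := by
    apply Finset.eq_univ_of_card
    rw [Finset.card_image_of_injOn hinj, Finset.card_product, Finset.card_range,
      Finset.card_range, ZMod.card]
  rw [← prod_val_map (Finset.range a) (Finset.range b)
      (fun p : ℕ × ℕ => (c + (p.1 : ZMod (a * b)) * b) - (e + (p.2 : ZMod (a * b)))),
    ← Finset.image_val_of_injOn hinj, himg]

lemma extDiff_neg {G : Type*} [AddGroup G] (A B : Finset G) :
    extDiff B A = (extDiff A B).map (fun z => -z) := by
  unfold extDiff
  rw [Multiset.map_bind]
  simp only [Multiset.map_map, Function.comp, neg_sub]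
  exact (Multiset.bind_map_comm A.val B.val).symm

end aux

/-- let `v = ab` with `a, b ≥ 2`.  For any `1 ≤ k₁ ≤ b-1` and
`1 ≤ k₂ ≤ a-1` there exists a non-disjoint `(v, 2, k₁a, k₂b)`-GPSEDF in `ℤ_v`:
two subsets `A, B ⊆ ℤ_v` with `|A| = k₁a`, `|B| = k₂b` and
`Δ(A,B) = Δ(B,A) = k₁k₂·ℤ_v` as multisets. -/
theorem stmt_12 (a b k₁ k₂ : ℕ) (ha : 2 ≤ a) (hb : 2 ≤ b)
    (hk₁ : 1 ≤ k₁) (hk₁' : k₁ ≤ b - 1) (hk₂ : 1 ≤ k₂) (hk₂' : k₂ ≤ a - 1) :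
    haveI : NeZero (a * b) := ⟨by positivity⟩
    ∃ A B : Finset (ZMod (a * b)),
      A.card = k₁ * a ∧ B.card = k₂ * b ∧
      extDiff A B = (k₁ * k₂) • (Finset.univ : Finset (ZMod (a * b))).val ∧
      extDiff B A = (k₁ * k₂) • (Finset.univ : Finset (ZMod (a * b))).val := by
  haveI : NeZero (a * b) := ⟨by positivity⟩
  have ha0 : 0 < a := by omega
  have hb0 : 0 < b := by omega
  -- `A` consists of `k₁` cosets of the subgroup `⟨b⟩`, `B` is the interval `[0, k₂b)`
  -- written as `{j·b + r : j < k₂, r < b}`.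
  have hinjf : Set.InjOn (fun p : ℕ × ℕ => (p.1 : ZMod (a * b)) + (p.2 : ZMod (a * b)) * b)
      ↑(Finset.range k₁ ×ˢ Finset.range a) := by
    rintro ⟨i, t⟩ hp ⟨i', t'⟩ hq hpq
    simp only [Finset.coe_product, Set.mem_prod, Finset.mem_coe, Finset.mem_range] at hp hq
    simp only at hpq
    have h1 : ((i + t * b : ℕ) : ZMod (a * b)) = ((i' + t' * b : ℕ) : ZMod (a * b)) := by
      push_cast; linear_combination hpq
    have h2 : i + t * b = i' + t' * b :=
      cast_inj_lt (lt_mul (by omega) hp.2) (lt_mul (by omega) hq.2) h1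
    have h3 := nat_unique (show i < b by omega) (show i' < b by omega) h2
    simp [Prod.ext_iff, h3.1, h3.2]
  have hinjg : Set.InjOn (fun p : ℕ × ℕ => (p.1 : ZMod (a * b)) * b + (p.2 : ZMod (a * b)))
      ↑(Finset.range k₂ ×ˢ Finset.range b) := by
    rintro ⟨j, r⟩ hp ⟨j', r'⟩ hq hpq
    simp only [Finset.coe_product, Set.mem_prod, Finset.mem_coe, Finset.mem_range] at hp hq
    simp only at hpq
    have h1 : ((r + j * b : ℕ) : ZMod (a * b)) = ((r' + j' * b : ℕ) : ZMod (a * b)) := by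
      push_cast; linear_combination hpq
    have h2 : r + j * b = r' + j' * b :=
      cast_inj_lt (lt_mul hp.2 (by omega)) (lt_mul hq.2 (by omega)) h1
    have h3 := nat_unique hp.2 hq.2 h2
    simp [Prod.ext_iff, h3.1, h3.2]
  have main : extDiff
      ((Finset.range k₁ ×ˢ Finset.range a).image
        (fun p : ℕ × ℕ => (p.1 : ZMod (a * b)) + (p.2 : ZMod (a * b)) * b))
      ((Finset.range k₂ ×ˢ Finset.range b).image
        (fun p : ℕ × ℕ => (p.1 : ZMod (a * b)) * b + (p.2 : ZMod (a * b))))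
      = (k₁ * k₂) • (Finset.univ : Finset (ZMod (a * b))).val := by
    unfold extDiff
    rw [Finset.image_val_of_injOn hinjf, Finset.image_val_of_injOn hinjg,
      Multiset.bind_map]
    simp only [Multiset.map_map, Function.comp]
    rw [prod_val_bind]
    simp only [prod_val_map]
    have hswap : ∀ i : ℕ,
        ((Finset.range a).val.bind fun t => (Finset.range k₂).val.bind fun j =>
          (Finset.range b).val.map fun (r : ℕ) =>
            ((i : ZMod (a * b)) + (t : ZMod (a * b)) * b) -
              ((j : ZMod (a * b)) * b + (r : ZMod (a * b))))
        = ((Finset.range k₂).val.bind fun j => (Finset.range a).val.bind fun t =>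
          (Finset.range b).val.map fun (r : ℕ) =>
            ((i : ZMod (a * b)) + (t : ZMod (a * b)) * b) -
              ((j : ZMod (a * b)) * b + (r : ZMod (a * b)))) := fun i =>
      Multiset.bind_bind _ _
    calc ((Finset.range k₁).val.bind fun i => (Finset.range a).val.bind fun t =>
          (Finset.range k₂).val.bind fun j => (Finset.range b).val.map fun (r : ℕ) =>
            ((i : ZMod (a * b)) + (t : ZMod (a * b)) * b) -
              ((j : ZMod (a * b)) * b + (r : ZMod (a * b))))
        = (Finset.range k₁).val.bind fun i => (Finset.range k₂).val.bind fun j =>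
          (Finset.range a).val.bind fun t => (Finset.range b).val.map fun (r : ℕ) =>
            ((i : ZMod (a * b)) + (t : ZMod (a * b)) * b) -
              ((j : ZMod (a * b)) * b + (r : ZMod (a * b))) :=
          Multiset.bind_congr fun i _ => hswap i
      _ = (Finset.range k₁).val.bind fun _ => (Finset.range k₂).val.bind fun _ =>
            (Finset.univ : Finset (ZMod (a * b))).val :=
          Multiset.bind_congr fun i _ => Multiset.bind_congr fun j _ =>
            key a b ha0 hb0 (i : ZMod (a * b)) ((j : ZMod (a * b)) * b)
      _ = (k₁ * k₂) • (Finset.univ : Finset (ZMod (a * b))).val := by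
          rw [bind_const, bind_const]
          simp [Finset.range_val, Multiset.card_range, mul_smul]
  refine ⟨(Finset.range k₁ ×ˢ Finset.range a).image
    (fun p : ℕ × ℕ => (p.1 : ZMod (a * b)) + (p.2 : ZMod (a * b)) * b),
    (Finset.range k₂ ×ˢ Finset.range b).image
    (fun p : ℕ × ℕ => (p.1 : ZMod (a * b)) * b + (p.2 : ZMod (a * b))), ?_, ?_, ?_, ?_⟩
  · rw [Finset.card_image_of_injOn hinjf, Finset.card_product, Finset.card_range,
    Finset.card_range]
  · rw [Finset.card_image_of_injOn hinjg, Finset.card_product, Finset.card_range,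
    Finset.card_range]
  · exact main
  · rw [extDiff_neg, main, Multiset.map_nsmul]
    congr 1
    have h1 : Set.InjOn (fun z : ZMod (a * b) => -z) ↑(Finset.univ : Finset (ZMod (a * b))) :=
      fun x _ y _ h => neg_injective h
    rw [← Finset.image_val_of_injOn h1,
      Finset.image_univ_of_surjective (fun z => ⟨-z, neg_neg z⟩)]
end
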